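/- Let k ≥ 1 and let M ∈ ℝ^{k×k} have all entries strictly positive, q ∈ ℝ^k. Define SOL(M, q) = {θ ∈ ℝ^k : θ ≥ 0, Mθ + q ≥ 0, θ^T (Mθ + q) = 0}, and call θ* ∈ SOL(M, q) strongly stable if there exist ε > 0 and δ > 0 such that for every (M', q') with ‖M' − M‖ < δ and ‖q' − q‖ < δ, the set SOL(M', q') ∩ {θ : ‖θ − θ*‖ < ε} contains exactly one point. Suppose every element of SOL(M, q) is strongly stable, and let θ* ∈ SOL(M, q) satisfy strict complementarity, i.e., θ*_i + (Mθ* + q)_i > 0 for every i. Then for any sequences M_n → M and q_n → q there exists N such that for every n ≥ N there is θ_n ∈ SOL(M_n, q_n) with {i : (θ_n)_i > 0} = {i : θ*_i > 0}. -/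

import Mathlib

open Filter Matrix

private lemma sum_subtype_aux {k : ℕ} (p : Fin k → Prop) [DecidablePred p]
    (f : Fin k → ℝ) (hf : ∀ j, ¬ p j → f j = 0) :
    ∑ j, f j = ∑ j : {j // p j}, f j.1 := by
  rw [← Finset.sum_filter_of_ne (p := p) (fun x _ hx => by
    by_contra hp; exact hx (hf x hp))]
  exact Finset.sum_subtype _ (by simp) f

theorem stmt15 (k : ℕ) (hk : 0 < k)
    (M : Fin k → Fin k → ℝ) (q : Fin k → ℝ)
    (hMpos : ∀ i j, 0 < M i j)
    (SOL : (Fin k → Fin k → ℝ) → (Fin k → ℝ) → Set (Fin k → ℝ))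
    (hSOL : ∀ M' q', SOL M' q' =
      {θ : Fin k → ℝ | (∀ i, 0 ≤ θ i) ∧ (∀ i, 0 ≤ (∑ j, M' i j * θ j) + q' i) ∧
        ∑ i, θ i * ((∑ j, M' i j * θ j) + q' i) = 0})
    (hstable : ∀ θs ∈ SOL M q, ∃ ε > (0 : ℝ), ∃ δ > (0 : ℝ),
      ∀ (M' : Fin k → Fin k → ℝ) (q' : Fin k → ℝ), ‖M' - M‖ < δ → ‖q' - q‖ < δ →
        ∃! θ : Fin k → ℝ, θ ∈ SOL M' q' ∧ ‖θ - θs‖ < ε)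
    (θs : Fin k → ℝ) (hθs : θs ∈ SOL M q)
    (hstrict : ∀ i, 0 < θs i + ((∑ j, M i j * θs j) + q i))
    (Mn : ℕ → Fin k → Fin k → ℝ) (qn : ℕ → Fin k → ℝ)
    (hMn : Filter.Tendsto Mn Filter.atTop (nhds M))
    (hqn : Filter.Tendsto qn Filter.atTop (nhds q)) :
    ∃ N : ℕ, ∀ n ≥ N, ∃ θn ∈ SOL (Mn n) (qn n),
      {i : Fin k | 0 < θn i} = {i : Fin k | 0 < θs i} := by
  classical
  obtain ⟨ε, hε, δ, hδ, huniq⟩ := hstable θs hθs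
  rw [hSOL] at hθs
  obtain ⟨hθnn, hwnn, hsum⟩ := hθs
  set w : Fin k → ℝ := fun i => (∑ j, M i j * θs j) + q i with hw
  set p : Fin k → Prop := fun i => 0 < θs i with hp
  have hterm : ∀ i, θs i * w i = 0 := fun i =>
    (Finset.sum_eq_zero_iff_of_nonneg
      (fun i _ => mul_nonneg (hθnn i) (hwnn i))).mp hsum i (Finset.mem_univ i)
  have hwzero : ∀ i, p i → w i = 0 := fun i hi => by
    rcases mul_eq_zero.mp (hterm i) with h | h
    · exact absurd h (ne_of_gt hi)
    · exact h
  have hθzero : ∀ i, ¬ p i → θs i = 0 := fun i hi =>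
    le_antisymm (not_lt.mp hi) (hθnn i)
  have hwpos : ∀ i, ¬ p i → 0 < w i := fun i hi => by
    have := hstrict i
    rwa [hθzero i hi, zero_add] at this
  set A : Matrix {i // p i} {i // p i} ℝ := Matrix.of fun i j => M i.1 j.1 with hA
  set b : {i // p i} → ℝ := fun i => -(q i.1) with hb
  -- θs restricted solves A x = b
  have hsumθ : ∀ (M' : Fin k → Fin k → ℝ) (θ : Fin k → ℝ), (∀ j, ¬ p j → θ j = 0) →
      ∀ i : Fin k, (∑ j, M' i j * θ j) = ∑ j : {j // p j}, M' i j.1 * θ j.1 :=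
    fun M' θ hθ i => sum_subtype_aux p _ (fun j hj => by rw [hθ j hj, mul_zero])
  have hAθ : A.mulVec (fun j => θs j.1) = b := by
    funext i
    have h1 := hsumθ M θs hθzero i.1
    have h2 : w i.1 = 0 := hwzero i.1 i.2
    have h3 : (∑ j, M i.1 j * θs j) = -(q i.1) := by
      have h2' := h2
      simp only [hw] at h2'
      linarith
    simp only [Matrix.mulVec, dotProduct, hA, Matrix.of_apply, hb]
    rw [← h1, h3]
  -- uniqueness at the unperturbed problem
  have hθsSOL : θs ∈ SOL M q := by rw [hSOL]; exact ⟨hθnn, hwnn, hsum⟩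
  have huniq0 := huniq M q (by simpa using hδ) (by simpa using hδ)
  -- A is invertible
  have hdetA : A.det ≠ 0 := by
    intro hdet
    obtain ⟨v, hv0, hvA⟩ := Matrix.exists_mulVec_eq_zero_iff.mpr hdet
    set vt : Fin k → ℝ := fun i => if h : p i then v ⟨i, h⟩ else 0 with hvt
    set u : Fin k → ℝ := fun i => ∑ j, M i j * vt j with hu
    have hvt0 : ∀ j, ¬ p j → vt j = 0 := fun j hj => by simp [hvt, hj]
    have huzero : ∀ i, p i → u i = 0 := by
      intro i hi
      have h1 := hsumθ M vt hvt0 i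
      have h2 : (∑ j : {j // p j}, M i j.1 * vt j.1) = A.mulVec v ⟨i, hi⟩ := by
        simp only [Matrix.mulVec, dotProduct, hA, Matrix.of_apply]
        refine Finset.sum_congr rfl fun j _ => ?_
        rw [hvt]; simp [j.2]
      show (∑ j, M i j * vt j) = 0
      rw [h1, h2, hvA]; rfl
    set c : ℝ := ‖vt‖ + 1 with hc
    set c2 : ℝ := ‖u‖ + 1 with hc2
    have hcpos : 0 < c := by positivity
    have hc2pos : 0 < c2 := by positivity
    have hvtle : ∀ i, |vt i| ≤ ‖vt‖ := fun i => by
      simpa [Real.norm_eq_abs] using norm_le_pi_norm vt i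
    have hule : ∀ i, |u i| ≤ ‖u‖ := fun i => by
      simpa [Real.norm_eq_abs] using norm_le_pi_norm u i
    set g : Fin k → ℝ := fun i => if p i then θs i / (2 * c) else w i / (2 * c2) with hg
    have hne : (Finset.univ : Finset (Fin k)).Nonempty := ⟨⟨0, hk⟩, Finset.mem_univ _⟩
    set t : ℝ := min (ε / (2 * c)) (Finset.univ.inf' hne g) with ht
    have hgpos : ∀ i, 0 < g i := by
      intro i
      rw [hg]
      by_cases hi : p i
      · simp only [hi, if_true]; exact div_pos hi (by positivity)
      · simp only [hi, if_false]; exact div_pos (hwpos i hi) (by positivity)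
    have htpos : 0 < t := by
      rw [ht]
      refine lt_min (by positivity) ?_
      rw [Finset.lt_inf'_iff]
      exact fun i _ => hgpos i
    have htg : ∀ i, t ≤ g i := fun i =>
      (min_le_right _ _).trans (Finset.inf'_le _ (Finset.mem_univ i))
    set θ' : Fin k → ℝ := fun i => θs i + t * vt i with hθ'
    -- θ' is a solution
    have hθ'w : ∀ i, (∑ j, M i j * θ' j) + q i = w i + t * u i := by
      intro i
      rw [hw, hu]
      have : (∑ j, M i j * θ' j) = (∑ j, M i j * θs j) + t * ∑ j, M i j * vt j := by
        rw [Finset.mul_sum, ← Finset.sum_add_distrib]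
        refine Finset.sum_congr rfl fun j _ => ?_
        rw [hθ']; ring
      rw [this]; ring
    have hθ'nn : ∀ i, 0 ≤ θ' i := by
      intro i
      show 0 ≤ θs i + t * vt i
      by_cases hi : p i
      · have h1 : t * c ≤ θs i / 2 := by
          have h0 := htg i
          simp only [hg, hi, if_true] at h0
          calc t * c ≤ (θs i / (2 * c)) * c :=
                mul_le_mul_of_nonneg_right h0 hcpos.le
            _ = θs i / 2 := by field_simp
        have h2 : |t * vt i| ≤ t * c := by
          rw [abs_mul, abs_of_pos htpos]
          have := hvtle i
          nlinarith
        obtain ⟨hl, hr⟩ := abs_le.mp h2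
        have hθi : 0 < θs i := hi
        set X := t * vt i with hX
        set Y := t * c with hY
        set Z := θs i with hZ
        clear_value X Y Z
        clear hX hY hZ h2
        linarith
      · rw [hvt0 i hi, mul_zero, add_zero]; exact hθnn i
    have hθ'wnn : ∀ i, 0 ≤ (∑ j, M i j * θ' j) + q i := by
      intro i
      rw [hθ'w i]
      by_cases hi : p i
      · rw [hwzero i hi, huzero i hi, mul_zero, add_zero]
      · have h1 : t * c2 ≤ w i / 2 := by
          have h0 := htg i
          simp only [hg, hi, if_false] at h0
          calc t * c2 ≤ (w i / (2 * c2)) * c2 :=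
                mul_le_mul_of_nonneg_right h0 hc2pos.le
            _ = w i / 2 := by field_simp
        have h2 : |t * u i| ≤ t * c2 := by
          rw [abs_mul, abs_of_pos htpos]
          have := hule i
          nlinarith
        obtain ⟨hl, hr⟩ := abs_le.mp h2
        have hwi : 0 < w i := hwpos i hi
        set X := t * u i with hX
        set Y := t * c2 with hY
        set Z := w i with hZ
        clear_value X Y Z
        clear hX hY hZ h2
        linarith
    have hθ'zero : ∀ i, ¬ p i → θ' i = 0 := fun i hi => by
      show θs i + t * vt i = 0
      rw [hvt0 i hi, hθzero i hi]; ring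
    have hθ'sum : ∑ i, θ' i * ((∑ j, M i j * θ' j) + q i) = 0 := by
      refine Finset.sum_eq_zero fun i _ => ?_
      by_cases hi : p i
      · rw [hθ'w i, hwzero i hi, huzero i hi]; ring
      · rw [hθ'zero i hi]; ring
    have hθ'SOL : θ' ∈ SOL M q := by rw [hSOL]; exact ⟨hθ'nn, hθ'wnn, hθ'sum⟩
    have hθ'dist : ‖θ' - θs‖ < ε := by
      have heq : θ' - θs = t • vt := by
        funext i
        simp only [Pi.sub_apply, Pi.smul_apply, smul_eq_mul, hθ']
        ring
      rw [heq, norm_smul, Real.norm_eq_abs, abs_of_pos htpos]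
      have h1 : t ≤ ε / (2 * c) := min_le_left _ _
      have h2 : ‖vt‖ ≤ c - 1 := by rw [hc]; linarith
      have h3 : 0 ≤ ‖vt‖ := norm_nonneg _
      have h4 : t * c ≤ ε / 2 := by
        calc t * c ≤ (ε / (2 * c)) * c := mul_le_mul_of_nonneg_right h1 hcpos.le
          _ = ε / 2 := by field_simp
      have h5 : t * ‖vt‖ ≤ t * c := mul_le_mul_of_nonneg_left (by linarith) htpos.le
      linarith
    have heq : θ' = θs := huniq0.unique ⟨hθ'SOL, hθ'dist⟩
      ⟨hθsSOL, by simpa using hε⟩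
    apply hv0
    funext j
    have hj1 := congrFun heq j.1
    simp only [hθ'] at hj1
    have hvtj : vt j.1 = 0 := by
      have ht0 : t * vt j.1 = 0 := by linarith
      rcases mul_eq_zero.mp ht0 with h | h
      · exact absurd h (ne_of_gt htpos)
      · exact h
    rw [hvt] at hvtj
    simp only [j.2, dif_pos] at hvtj
    simpa using hvtj
  -- construct the approximate solutions
  set An : ℕ → Matrix {i // p i} {i // p i} ℝ :=
    fun n => Matrix.of fun i j => Mn n i.1 j.1 with hAn
  set bn : ℕ → {i // p i} → ℝ := fun n i => -(qn n i.1) with hbn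
  set x : ℕ → {i // p i} → ℝ :=
    fun n => ((An n).det)⁻¹ • (adjugate (An n)).mulVec (bn n) with hx
  set θn : ℕ → Fin k → ℝ :=
    fun n i => if h : p i then x n ⟨i, h⟩ else 0 with hθn
  have hMne : ∀ i j, Tendsto (fun n => Mn n i j) atTop (nhds (M i j)) := fun i j =>
    tendsto_pi_nhds.mp (tendsto_pi_nhds.mp hMn i) j
  have hqne : ∀ i, Tendsto (fun n => qn n i) atTop (nhds (q i)) := fun i =>
    tendsto_pi_nhds.mp hqn i
  have hAnt : Tendsto An atTop (nhds A) := by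
    refine tendsto_pi_nhds.mpr ?_
    intro i
    rw [tendsto_pi_nhds]
    intro j
    exact hMne i.1 j.1
  have hdetAn : Tendsto (fun n => (An n).det) atTop (nhds A.det) :=
    ((Continuous.matrix_det continuous_id).tendsto A).comp hAnt
  have hadjAn : Tendsto (fun n => adjugate (An n)) atTop (nhds (adjugate A)) :=
    ((Continuous.matrix_adjugate continuous_id).tendsto A).comp hAnt
  have hdetinv : Tendsto (fun n => ((An n).det)⁻¹) atTop (nhds (A.det)⁻¹) :=
    hdetAn.inv₀ hdetA
  have hlim : (A.det)⁻¹ • (adjugate A).mulVec b = fun j => θs j.1 := by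
    rw [← hAθ, Matrix.mulVec_mulVec, Matrix.adjugate_mul,
      Matrix.smul_mulVec, Matrix.one_mulVec, smul_smul,
      inv_mul_cancel₀ hdetA, one_smul]
  have hxc : ∀ i : {i // p i}, Tendsto (fun n => x n i) atTop (nhds (θs i.1)) := by
    intro i
    have h1 : Tendsto (fun n => (adjugate (An n)).mulVec (bn n) i) atTop
        (nhds ((adjugate A).mulVec b i)) := by
      simp only [Matrix.mulVec, dotProduct]
      refine tendsto_finset_sum _ fun j _ => Tendsto.mul ?_ ?_
      · exact tendsto_pi_nhds.mp (tendsto_pi_nhds.mp hadjAn i) j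
      · exact (hqne j.1).neg
    have h2 : Tendsto (fun n => x n i) atTop
        (nhds ((A.det)⁻¹ • (adjugate A).mulVec b i)) := by
      simp only [hx, Pi.smul_apply, smul_eq_mul]
      exact hdetinv.mul h1
    have := congrFun hlim i
    simp only [Pi.smul_apply] at this h2
    rwa [this] at h2
  have hθnt : ∀ j, Tendsto (fun n => θn n j) atTop (nhds (θs j)) := by
    intro j
    by_cases hj : p j
    · simp only [hθn, hj, dif_pos]
      exact hxc ⟨j, hj⟩
    · simp only [hθn, hj, dif_neg, not_false_iff]
      rw [hθzero j hj]
      exact tendsto_const_nhds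
  have hwnt : ∀ i, Tendsto (fun n => (∑ j, Mn n i j * θn n j) + qn n i) atTop
      (nhds (w i)) := by
    intro i
    rw [hw]
    exact (tendsto_finset_sum _ fun j _ => (hMne i j).mul (hθnt j)).add (hqne i)
  -- eventual properties
  have Ev1 : ∀ᶠ n in atTop, (An n).det ≠ 0 := hdetAn.eventually_ne hdetA
  have Ev2 : ∀ᶠ n in atTop, ∀ i : {i // p i}, 0 < x n i :=
    eventually_all.mpr fun i => (hxc i).eventually_const_lt i.2
  have Ev3 : ∀ᶠ n in atTop, ∀ i : Fin k, ¬ p i →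
      0 < (∑ j, Mn n i j * θn n j) + qn n i := by
    refine eventually_all.mpr fun i => ?_
    by_cases hi : p i
    · exact Filter.Eventually.of_forall fun n h => absurd hi h
    · exact ((hwnt i).eventually_const_lt (hwpos i hi)).mono fun n h _ => h
  obtain ⟨N, hN⟩ := eventually_atTop.mp (Ev1.and (Ev2.and Ev3))
  refine ⟨N, fun n hn => ?_⟩
  obtain ⟨hdet, hpos, hoff⟩ := hN n hn
  -- the linear system is solved
  have hsolve : (An n).mulVec (x n) = bn n := by
    rw [hx]
    rw [Matrix.mulVec_smul, Matrix.mulVec_mulVec, Matrix.mul_adjugate,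
      Matrix.smul_mulVec, Matrix.one_mulVec, smul_smul,
      inv_mul_cancel₀ hdet, one_smul]
  have hθnzero : ∀ j, ¬ p j → θn n j = 0 := fun j hj => by
    simp [hθn, hj]
  have hkey : ∀ i : Fin k, p i → (∑ j, Mn n i j * θn n j) + qn n i = 0 := by
    intro i hi
    have h1 := hsumθ (Mn n) (θn n) hθnzero i
    have h2 : (∑ j : {j // p j}, Mn n i j.1 * θn n j.1) = (An n).mulVec (x n) ⟨i, hi⟩ := by
      simp only [Matrix.mulVec, dotProduct, hAn, Matrix.of_apply]
      refine Finset.sum_congr rfl fun j _ => ?_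
      simp [hθn, j.2]
    rw [h1, h2, hsolve, hbn]
    ring
  refine ⟨θn n, ?_, ?_⟩
  · rw [hSOL]
    refine ⟨?_, ?_, ?_⟩
    · intro i
      by_cases hi : p i
      · have := hpos ⟨i, hi⟩
        simp only [hθn, hi, dif_pos]
        exact le_of_lt this
      · rw [hθnzero i hi]
    · intro i
      by_cases hi : p i
      · rw [hkey i hi]
      · exact le_of_lt (hoff i hi)
    · refine Finset.sum_eq_zero fun i _ => ?_
      by_cases hi : p i
      · rw [hkey i hi, mul_zero]
      · rw [hθnzero i hi, zero_mul]
  · ext i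
    simp only [Set.mem_setOf_eq]
    by_cases hi : p i
    · simp only [hθn, hi, dif_pos]
      exact iff_of_true (hpos ⟨i, hi⟩) trivial
    · rw [hθnzero i hi]
      exact iff_of_false (lt_irrefl 0) hi
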